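/- Let A, B ∈ R^{n×n} with ‖A − B‖_F^2 ≤ (1+ε)‖A − A_k‖_F^2 where B has rank at most k. Then ‖A − B‖_2^2 ≤ ‖A − A_k‖_2^2 + ε‖A − A_k‖_F^2. -/

import Mathlib

open Matrix

/-- Squared Frobenius norm of a matrix. -/
noncomputable def frobSq {n m : ℕ} (A : Matrix (Fin n) (Fin m) ℝ) : ℝ :=
  ∑ i, ∑ j, (A i j) ^ 2

/-- Spectral (operator) norm of a matrix. -/
noncomputable def spec {n m : ℕ} (A : Matrix (Fin n) (Fin m) ℝ) : ℝ :=
  ‖LinearMap.toContinuousLinearMap (Matrix.toEuclideanLin A)‖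

local notation "⟪" x ", " y "⟫" => @inner ℝ _ _ x y

namespace FrobSpecAux

variable {n : ℕ}

lemma frobSq_nonneg (M : Matrix (Fin n) (Fin n) ℝ) : 0 ≤ frobSq M :=
  Finset.sum_nonneg fun _ _ => Finset.sum_nonneg fun _ _ => sq_nonneg _

lemma frobSq_eq_zero {M : Matrix (Fin n) (Fin n) ℝ} (h : frobSq M ≤ 0) : M = 0 := by
  have h' : frobSq M = 0 := le_antisymm h (frobSq_nonneg M)
  ext i j
  have h1 : ∀ i ∈ Finset.univ, (0:ℝ) ≤ ∑ j, (M i j)^2 :=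
    fun _ _ => Finset.sum_nonneg fun _ _ => sq_nonneg _
  have := (Finset.sum_eq_zero_iff_of_nonneg h1).1 h' i (Finset.mem_univ i)
  have := (Finset.sum_eq_zero_iff_of_nonneg (fun _ _ => sq_nonneg _)).1 this j (Finset.mem_univ j)
  simpa using pow_eq_zero_iff (n := 2) (by norm_num) |>.1 this

lemma spec_zero : spec (0 : Matrix (Fin n) (Fin n) ℝ) = 0 := by
  unfold spec
  rw [show (Matrix.toEuclideanLin (0 : Matrix (Fin n) (Fin n) ℝ)) = 0 from map_zero _,
    map_zero]
  exact norm_zero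

lemma norm_apply_le_spec (M : Matrix (Fin n) (Fin n) ℝ) (x : EuclideanSpace ℝ (Fin n)) :
    ‖Matrix.toEuclideanLin M x‖ ≤ spec M * ‖x‖ :=
  (LinearMap.toContinuousLinearMap (Matrix.toEuclideanLin M)).le_opNorm x

lemma parseval_sq (b : OrthonormalBasis (Fin n) ℝ (EuclideanSpace ℝ (Fin n)))
    (x : EuclideanSpace ℝ (Fin n)) : ∑ i, ⟪b i, x⟫^2 = ‖x‖^2 := by
  have := b.sum_inner_mul_inner x x
  rw [← real_inner_self_eq_norm_sq, ← this]
  congr 1; ext i; rw [real_inner_comm, sq]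

lemma inner_toEuclideanLin (M : Matrix (Fin n) (Fin n) ℝ) (x y : EuclideanSpace ℝ (Fin n)) :
    ⟪y, Matrix.toEuclideanLin M x⟫ = ⟪Matrix.toEuclideanLin Mᴴ y, x⟫ := by
  rw [Matrix.toEuclideanLin_conjTranspose_eq_adjoint, LinearMap.adjoint_inner_left]

lemma norm_col_sq (M : Matrix (Fin n) (Fin n) ℝ) (i : Fin n) :
    ‖Matrix.toEuclideanLin Mᴴ (EuclideanSpace.single i (1:ℝ))‖^2 = ∑ j, (M i j)^2 := by
  rw [← real_inner_self_eq_norm_sq, Matrix.toEuclideanLin_apply]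
  simp [PiLp.inner_apply, Matrix.mulVec_single, sq, Matrix.conjTranspose_apply]
  rw [← sq, EuclideanSpace.norm_sq_eq]; simp [sq]

/-- Bessel-type bound: sum of squared norms over an orthonormal family is at most `frobSq`. -/
lemma sum_sq_apply_le_frobSq {m : ℕ} (M : Matrix (Fin n) (Fin n) ℝ)
    (w : Fin m → EuclideanSpace ℝ (Fin n)) (hw : Orthonormal ℝ w) :
    ∑ j, ‖Matrix.toEuclideanLin M (w j)‖^2 ≤ frobSq M := by
  have h1 : ∀ j, ‖Matrix.toEuclideanLin M (w j)‖^2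
      = ∑ i, ⟪Matrix.toEuclideanLin Mᴴ (EuclideanSpace.single i (1:ℝ)), w j⟫^2 := by
    intro j
    rw [← parseval_sq (EuclideanSpace.basisFun (Fin n) ℝ)]
    congr 1; ext i
    rw [EuclideanSpace.basisFun_apply, inner_toEuclideanLin]
  calc ∑ j, ‖Matrix.toEuclideanLin M (w j)‖^2
      = ∑ i, ∑ j, ⟪Matrix.toEuclideanLin Mᴴ (EuclideanSpace.single i (1:ℝ)), w j⟫^2 := by
        rw [Finset.sum_comm]; exact Finset.sum_congr rfl fun j _ => h1 j
    _ ≤ ∑ i, ‖Matrix.toEuclideanLin Mᴴ (EuclideanSpace.single i (1:ℝ))‖^2 := by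
        refine Finset.sum_le_sum fun i _ => ?_
        have hb := hw.sum_inner_products_le (s := Finset.univ)
          (Matrix.toEuclideanLin Mᴴ (EuclideanSpace.single i (1:ℝ)))
        refine le_trans (le_of_eq ?_) hb
        refine Finset.sum_congr rfl fun j _ => ?_
        rw [real_inner_comm, Real.norm_eq_abs, sq_abs]
    _ = frobSq M := by
        unfold frobSq
        exact Finset.sum_congr rfl fun i _ => norm_col_sq M i

/-- Parseval: sum of squared norms over an orthonormal basis equals `frobSq`. -/
lemma sum_sq_apply_eq_frobSq (M : Matrix (Fin n) (Fin n) ℝ)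
    (b : OrthonormalBasis (Fin n) ℝ (EuclideanSpace ℝ (Fin n))) :
    ∑ j, ‖Matrix.toEuclideanLin M (b j)‖^2 = frobSq M := by
  have h1 : ∀ j, ‖Matrix.toEuclideanLin M (b j)‖^2
      = ∑ i, ⟪Matrix.toEuclideanLin Mᴴ (EuclideanSpace.single i (1:ℝ)), b j⟫^2 := by
    intro j
    rw [← parseval_sq (EuclideanSpace.basisFun (Fin n) ℝ)]
    congr 1; ext i
    rw [EuclideanSpace.basisFun_apply, inner_toEuclideanLin]
  calc ∑ j, ‖Matrix.toEuclideanLin M (b j)‖^2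
      = ∑ i, ∑ j, ⟪Matrix.toEuclideanLin Mᴴ (EuclideanSpace.single i (1:ℝ)), b j⟫^2 := by
        rw [Finset.sum_comm]; exact Finset.sum_congr rfl fun j _ => h1 j
    _ = ∑ i, ‖Matrix.toEuclideanLin Mᴴ (EuclideanSpace.single i (1:ℝ))‖^2 := by
        refine Finset.sum_congr rfl fun i _ => ?_
        rw [← parseval_sq b]
        exact Finset.sum_congr rfl fun j _ => by rw [real_inner_comm]
    _ = frobSq M := by
        unfold frobSq
        exact Finset.sum_congr rfl fun i _ => norm_col_sq M i

lemma exists_unit_spec (M : Matrix (Fin n) (Fin n) ℝ) (hn : 0 < n) :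
    ∃ u : EuclideanSpace ℝ (Fin n), ‖u‖ = 1 ∧ ‖Matrix.toEuclideanLin M u‖ = spec M := by
  set T := LinearMap.toContinuousLinearMap (Matrix.toEuclideanLin M) with hT
  have hsph : (Metric.sphere (0 : EuclideanSpace ℝ (Fin n)) 1).Nonempty := by
    refine ⟨EuclideanSpace.single ⟨0, hn⟩ (1:ℝ), ?_⟩
    simp [EuclideanSpace.norm_single]
  obtain ⟨u, hu_mem, hu_max⟩ := (isCompact_sphere (0 : EuclideanSpace ℝ (Fin n)) 1).exists_isMaxOn
    hsph (Continuous.norm T.continuous).continuousOn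
  have hu1 : ‖u‖ = 1 := by simpa using hu_mem
  refine ⟨u, hu1, le_antisymm ?_ ?_⟩
  · calc ‖Matrix.toEuclideanLin M u‖ = ‖T u‖ := rfl
      _ ≤ ‖T‖ * ‖u‖ := T.le_opNorm u
      _ = spec M := by rw [hu1, mul_one]; rfl
  · refine ContinuousLinearMap.opNorm_le_bound T (by positivity) fun x => ?_
    rcases eq_or_ne x 0 with rfl | hx
    · simp
    · have hxs : (‖x‖⁻¹ • x) ∈ Metric.sphere (0 : EuclideanSpace ℝ (Fin n)) 1 := by
        simp [norm_smul, abs_of_nonneg, inv_mul_cancel₀ (norm_ne_zero_iff.2 hx)]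
      have := hu_max hxs
      simp only [Set.mem_setOf_eq] at this
      rw [show T (‖x‖⁻¹ • x) = ‖x‖⁻¹ • T x from map_smul T _ _] at this
      rw [norm_smul, norm_inv, norm_norm] at this
      have h2 : ‖T x‖ ≤ ‖x‖ * ‖Matrix.toEuclideanLin M u‖ := by
        rw [show ‖Matrix.toEuclideanLin M u‖ = ‖T u‖ from rfl]
        have hxn : (0:ℝ) < ‖x‖ := norm_pos_iff.2 hx
        calc ‖T x‖ = ‖x‖ * (‖x‖⁻¹ * ‖T x‖) := by field_simp
          _ ≤ ‖x‖ * ‖T u‖ := by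
              exact mul_le_mul_of_nonneg_left this (le_of_lt hxn)
      linarith [h2, mul_comm ‖x‖ ‖Matrix.toEuclideanLin M u‖]

lemma finrank_ker_toEuclideanLin {k : ℕ} {M : Matrix (Fin n) (Fin n) ℝ} (h : M.rank ≤ k) :
    n - k ≤ Module.finrank ℝ (LinearMap.ker (Matrix.toEuclideanLin M)) := by
  have hrank : M.rank = Module.finrank ℝ (LinearMap.range (Matrix.toEuclideanLin M)) := by
    rw [Matrix.rank_eq_finrank_range_toLin M (PiLp.basisFun 2 ℝ (Fin n))
      (PiLp.basisFun 2 ℝ (Fin n))]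
    rfl
  have := LinearMap.finrank_range_add_finrank_ker (Matrix.toEuclideanLin M)
  rw [finrank_euclideanSpace_fin] at this
  omega

lemma toEuclideanLin_mul (M N : Matrix (Fin n) (Fin n) ℝ) (x : EuclideanSpace ℝ (Fin n)) :
    Matrix.toEuclideanLin (M * N) x = Matrix.toEuclideanLin M (Matrix.toEuclideanLin N x) := by
  simp only [Matrix.toEuclideanLin_apply]
  rw [← Matrix.mulVec_mulVec]

lemma norm_sq_eq_inner_gram (A : Matrix (Fin n) (Fin n) ℝ) (x : EuclideanSpace ℝ (Fin n)) :
    ‖Matrix.toEuclideanLin A x‖^2 = ⟪x, Matrix.toEuclideanLin (Aᴴ * A) x⟫ := by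
  rw [toEuclideanLin_mul, inner_toEuclideanLin, Matrix.conjTranspose_conjTranspose,
    real_inner_self_eq_norm_sq]

lemma toEuclideanLin_eig (H : Matrix (Fin n) (Fin n) ℝ) (hH : H.IsHermitian) (i : Fin n) :
    Matrix.toEuclideanLin H (hH.eigenvectorBasis i)
      = (hH.eigenvalues i : ℝ) • hH.eigenvectorBasis i := by
  have := hH.mulVec_eigenvectorBasis i
  apply (WithLp.equiv 2 (Fin n → ℝ)).injective
  simp only [WithLp.equiv_apply, Matrix.ofLp_toEuclideanLin_apply]
  ext j
  have hj := congrFun this j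
  simpa using hj

lemma rayleigh_expand (H : Matrix (Fin n) (Fin n) ℝ)
    (b : OrthonormalBasis (Fin n) ℝ (EuclideanSpace ℝ (Fin n))) (μ : Fin n → ℝ)
    (heig : ∀ i, Matrix.toEuclideanLin H (b i) = μ i • b i) (x : EuclideanSpace ℝ (Fin n)) :
    ⟪x, Matrix.toEuclideanLin H x⟫ = ∑ i, μ i * ⟪b i, x⟫^2 := by
  calc ⟪x, Matrix.toEuclideanLin H x⟫
      = ⟪x, Matrix.toEuclideanLin H (∑ i, ⟪b i, x⟫ • b i)⟫ := by rw [b.sum_repr']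
    _ = ∑ i, μ i * ⟪b i, x⟫^2 := by
        rw [map_sum, inner_sum]
        refine Finset.sum_congr rfl fun i _ => ?_
        rw [_root_.map_smul, heig i, smul_smul, real_inner_smul_right, real_inner_comm]
        ring

lemma exchange (μ t : Fin n → ℝ) (hmono : Monotone μ) (hμ0 : ∀ i, 0 ≤ μ i)
    (ht0 : ∀ i, 0 ≤ t i) (ht1 : ∀ i, t i ≤ 1) (p : Fin n)
    (hsum : ((Finset.Iio p).card : ℝ) ≤ ∑ i, t i) :
    ∑ i ∈ Finset.Iio p, μ i ≤ ∑ i, t i * μ i := by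
  set c := μ p with hc
  have hcompl : (Finset.Iio p)ᶜ = Finset.Ici p := by
    ext i; simp [not_lt]
  have hsplit : ∑ i, t i * μ i
      = ∑ i ∈ Finset.Iio p, t i * μ i + ∑ i ∈ Finset.Ici p, t i * μ i := by
    rw [← hcompl, Finset.sum_add_sum_compl]
  have h1 : ∑ i ∈ Finset.Iio p, (1 - t i) * μ i ≤ ∑ i ∈ Finset.Iio p, (1 - t i) * c := by
    refine Finset.sum_le_sum fun i hi => ?_
    exact mul_le_mul_of_nonneg_left (hmono (le_of_lt (Finset.mem_Iio.1 hi)))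
      (by linarith [ht1 i])
  have h2 : ∑ i ∈ Finset.Ici p, t i * c ≤ ∑ i ∈ Finset.Ici p, t i * μ i := by
    refine Finset.sum_le_sum fun i hi => ?_
    exact mul_le_mul_of_nonneg_left (hmono (Finset.mem_Ici.1 hi)) (ht0 i)
  have h3 : ∑ i ∈ Finset.Iio p, (1 - t i) * c ≤ ∑ i ∈ Finset.Ici p, t i * c := by
    rw [← Finset.sum_mul, ← Finset.sum_mul]
    refine mul_le_mul_of_nonneg_right ?_ (hμ0 p)
    have e1 : ∑ i ∈ Finset.Iio p, (1 - t i)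
        = (Finset.Iio p).card - ∑ i ∈ Finset.Iio p, t i := by
      rw [Finset.sum_sub_distrib, Finset.sum_const, nsmul_eq_mul, mul_one]
    have e2 : ∑ i, t i = ∑ i ∈ Finset.Iio p, t i + ∑ i ∈ Finset.Ici p, t i := by
      rw [← hcompl, Finset.sum_add_sum_compl]
    rw [e1]
    linarith [hsum, e2]
  have expand1 : ∑ i ∈ Finset.Iio p, (1 - t i) * μ i
      = ∑ i ∈ Finset.Iio p, μ i - ∑ i ∈ Finset.Iio p, t i * μ i := by
    rw [← Finset.sum_sub_distrib]
    exact Finset.sum_congr rfl fun i _ => by ring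
  linarith [h1, h2, h3, hsplit, expand1]

end FrobSpecAux
section step2
open Matrix FrobSpecAux
variable {n : ℕ}

lemma pivot_le_spec {k : ℕ} (hk : k < n) (A M : Matrix (Fin n) (Fin n) ℝ)
    (hM : M.rank ≤ k)
    (b : OrthonormalBasis (Fin n) ℝ (EuclideanSpace ℝ (Fin n))) (μ : Fin n → ℝ)
    (hmono : Monotone μ)
    (hray : ∀ x : EuclideanSpace ℝ (Fin n),
      ‖Matrix.toEuclideanLin A x‖^2 = ∑ i, μ i * ⟪b i, x⟫^2) :
    μ (⟨n - k - 1, by omega⟩ : Fin n) ≤ spec (A - M)^2 := by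
  set p : Fin n := ⟨n - k - 1, by omega⟩ with hp
  set S : Submodule ℝ (EuclideanSpace ℝ (Fin n)) :=
    Submodule.span ℝ (Set.range (fun i : ↥(Finset.Ici p) => b ↑i)) with hS
  set K := LinearMap.ker (Matrix.toEuclideanLin M) with hK
  have hli : LinearIndependent ℝ (fun i : ↥(Finset.Ici p) => b ↑i) :=
    b.orthonormal.linearIndependent.comp Subtype.val Subtype.val_injective
  have hSrank : Module.finrank ℝ S = k + 1 := by
    rw [hS, finrank_span_eq_card hli]
    rw [Fintype.card_coe, Fin.card_Ici]
    simp only [hp, Fin.val_mk]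
    omega
  have hKrank : n - k ≤ Module.finrank ℝ K := finrank_ker_toEuclideanLin hM
  -- find a nonzero vector in S ⊓ K
  have hpos : 0 < Module.finrank ℝ ↥(S ⊓ K) := by
    have hsum := Submodule.finrank_sup_add_finrank_inf_eq S K
    have hle : Module.finrank ℝ ↥(S ⊔ K) ≤ n := by
      have := Submodule.finrank_le (S ⊔ K)
      rwa [finrank_euclideanSpace_fin] at this
    omega
  haveI := Module.finrank_pos_iff.1 hpos
  obtain ⟨⟨v, hv⟩, hvne⟩ := exists_ne (0 : ↥(S ⊓ K))
  have hv0 : v ≠ 0 := by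
    intro h
    exact hvne (by simpa [Submodule.mk_eq_zero] using h)
  set u : EuclideanSpace ℝ (Fin n) := ‖v‖⁻¹ • v with hu
  have hu1 : ‖u‖ = 1 := by
    rw [hu, norm_smul, norm_inv, norm_norm, inv_mul_cancel₀ (norm_ne_zero_iff.2 hv0)]
  have huS : u ∈ S := S.smul_mem _ (Submodule.mem_inf.1 hv).1
  have huK : u ∈ K := K.smul_mem _ (Submodule.mem_inf.1 hv).2
  -- coefficients of u vanish below p
  have hcoeff : ∀ j, j ∉ Finset.Ici p → ⟪b j, u⟫ = 0 := by
    intro j hj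
    have hSle : S ≤ (ℝ ∙ b j)ᗮ := by
      rw [hS, Submodule.span_le]
      rintro x ⟨i, rfl⟩
      rw [SetLike.mem_coe, Submodule.mem_orthogonal]
      intro y hy
      obtain ⟨c, rfl⟩ := Submodule.mem_span_singleton.1 hy
      rw [real_inner_smul_left]
      have hij : (i : Fin n) ≠ j := fun h => hj (h ▸ i.2)
      rw [b.orthonormal.2 (fun h => hij h.symm)]
      ring
    have := hSle huS
    rw [Submodule.mem_orthogonal] at this
    exact this (b j) (Submodule.mem_span_singleton_self _)
  -- Rayleigh bound
  have hray_u : μ p ≤ ‖Matrix.toEuclideanLin A u‖^2 := by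
    rw [hray u]
    have hterm : ∀ i : Fin n, μ p * ⟪b i, u⟫^2 ≤ μ i * ⟪b i, u⟫^2 := by
      intro i
      by_cases hi : i ∈ Finset.Ici p
      · exact mul_le_mul_of_nonneg_right (hmono (Finset.mem_Ici.1 hi)) (sq_nonneg _)
      · rw [hcoeff i hi]; simp
    calc μ p = μ p * ‖u‖^2 := by rw [hu1]; ring
      _ = μ p * ∑ i, ⟪b i, u⟫^2 := by rw [parseval_sq b u]
      _ = ∑ i, μ p * ⟪b i, u⟫^2 := by rw [Finset.mul_sum]
      _ ≤ ∑ i, μ i * ⟪b i, u⟫^2 := Finset.sum_le_sum fun i _ => hterm i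
  -- u is in the kernel of M
  have hAu : Matrix.toEuclideanLin (A - M) u = Matrix.toEuclideanLin A u := by
    rw [map_sub, LinearMap.sub_apply, LinearMap.mem_ker.1 huK, sub_zero]
  have hspec : ‖Matrix.toEuclideanLin (A - M) u‖ ≤ spec (A - M) := by
    have := norm_apply_le_spec (A - M) u
    rwa [hu1, mul_one] at this
  calc μ p ≤ ‖Matrix.toEuclideanLin A u‖^2 := hray_u
    _ = ‖Matrix.toEuclideanLin (A - M) u‖^2 := by rw [hAu]
    _ ≤ spec (A - M)^2 := by
        have h0 : (0:ℝ) ≤ ‖Matrix.toEuclideanLin (A - M) u‖ := norm_nonneg _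
        nlinarith [hspec]

end step2
section step1
open Matrix FrobSpecAux
variable {n : ℕ}

lemma eckart_achievable {k : ℕ} (hk : k < n) (A : Matrix (Fin n) (Fin n) ℝ)
    (b : OrthonormalBasis (Fin n) ℝ (EuclideanSpace ℝ (Fin n))) (μ : Fin n → ℝ)
    (hAb : ∀ i, ‖Matrix.toEuclideanLin A (b i)‖^2 = μ i) :
    ∃ D : Matrix (Fin n) (Fin n) ℝ, D.rank ≤ k ∧
      frobSq (A - D) = ∑ i ∈ Finset.Iic (⟨n - k - 1, by omega⟩ : Fin n), μ i := by
  classical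
  set p : Fin n := ⟨n - k - 1, by omega⟩ with hp
  set Q : EuclideanSpace ℝ (Fin n) →ₗ[ℝ] EuclideanSpace ℝ (Fin n) :=
    ∑ i ∈ Finset.Ioi p, LinearMap.smulRight ((innerSL ℝ (b i)).toLinearMap) (b i) with hQ
  have hQapply : ∀ x, Q x = ∑ i ∈ Finset.Ioi p, (inner ℝ (b i) x : ℝ) • b i := by
    intro x
    rw [hQ, LinearMap.sum_apply]
    rfl
  have hQb : ∀ j, Q (b j) = if j ∈ Finset.Ioi p then b j else 0 := by
    intro j
    rw [hQapply]
    by_cases hj : j ∈ Finset.Ioi p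
    · rw [if_pos hj, Finset.sum_eq_single j]
      · rw [show (inner ℝ (b j) (b j) : ℝ) = 1 by
          rw [real_inner_self_eq_norm_sq, b.orthonormal.1 j]; norm_num]
        simp
      · intro i _ hij
        rw [b.orthonormal.2 hij]
        simp
      · intro h; exact absurd hj h
    · rw [if_neg hj]
      refine Finset.sum_eq_zero fun i hi => ?_
      have hij : i ≠ j := fun h => hj (h ▸ hi)
      rw [b.orthonormal.2 hij]
      simp
  set D : Matrix (Fin n) (Fin n) ℝ :=
    Matrix.toEuclideanLin.symm ((Matrix.toEuclideanLin A) ∘ₗ Q) with hD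
  have hTD : Matrix.toEuclideanLin D = (Matrix.toEuclideanLin A) ∘ₗ Q := by
    rw [hD, LinearEquiv.apply_symm_apply]
  refine ⟨D, ?_, ?_⟩
  · -- rank bound
    have hrank : D.rank = Module.finrank ℝ (LinearMap.range (Matrix.toEuclideanLin D)) := by
      rw [Matrix.rank_eq_finrank_range_toLin D (PiLp.basisFun 2 ℝ (Fin n))
        (PiLp.basisFun 2 ℝ (Fin n))]
      rfl
    rw [hrank, hTD, LinearMap.range_comp]
    refine le_trans (Submodule.finrank_map_le _ _) ?_
    have hle : LinearMap.range Q ≤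
        Submodule.span ℝ (((Finset.Ioi p).image b : Finset (EuclideanSpace ℝ (Fin n))) :
          Set (EuclideanSpace ℝ (Fin n))) := by
      rintro y ⟨x, rfl⟩
      rw [hQapply]
      refine Submodule.sum_mem _ fun i hi => Submodule.smul_mem _ _ ?_
      exact Submodule.subset_span (by simp; exact ⟨i, Finset.mem_Ioi.1 hi, rfl⟩)
    refine le_trans (Submodule.finrank_mono hle) ?_
    refine le_trans (finrank_span_finset_le_card _) ?_
    refine le_trans (Finset.card_image_le) ?_
    rw [Fin.card_Ioi]
    simp only [hp, Fin.val_mk]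
    omega
  · -- Frobenius computation
    rw [← sum_sq_apply_eq_frobSq (A - D) b]
    have hterm : ∀ j, ‖Matrix.toEuclideanLin (A - D) (b j)‖^2
        = if j ∈ Finset.Iic p then μ j else 0 := by
      intro j
      rw [map_sub, LinearMap.sub_apply, hTD, LinearMap.comp_apply, hQb j]
      by_cases hj : j ∈ Finset.Ioi p
      · rw [if_pos hj, if_neg (by simpa [Finset.mem_Iic, not_le] using Finset.mem_Ioi.1 hj)]
        simp
      · rw [if_neg hj, if_pos (by simpa [Finset.mem_Iic, not_lt] using
          (fun h => hj (Finset.mem_Ioi.2 h) : ¬ p < j))]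
        rw [map_zero, sub_zero]
        exact hAb j
    calc ∑ j, ‖Matrix.toEuclideanLin (A - D) (b j)‖^2
        = ∑ j, if j ∈ Finset.Iic p then μ j else 0 :=
          Finset.sum_congr rfl fun j _ => hterm j
      _ = ∑ j ∈ Finset.Iic p, μ j := by
          rw [Finset.sum_ite_mem, Finset.univ_inter]

end step1
section step3
open Matrix FrobSpecAux
variable {n : ℕ}

lemma spec_sq_add_tail_le {k : ℕ} (hk : k < n) (A B : Matrix (Fin n) (Fin n) ℝ)
    (hBr : B.rank ≤ k)
    (b : OrthonormalBasis (Fin n) ℝ (EuclideanSpace ℝ (Fin n))) (μ : Fin n → ℝ)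
    (hmono : Monotone μ) (hμ0 : ∀ i, 0 ≤ μ i)
    (hray : ∀ x : EuclideanSpace ℝ (Fin n),
      ‖Matrix.toEuclideanLin A x‖^2 = ∑ i, μ i * (inner ℝ (b i) x : ℝ)^2) :
    spec (A - B)^2 + ∑ i ∈ Finset.Iio (⟨n - k - 1, by omega⟩ : Fin n), μ i
      ≤ frobSq (A - B) := by
  classical
  set p : Fin n := ⟨n - k - 1, by omega⟩ with hp
  obtain ⟨u, hu1, huspec⟩ := exists_unit_spec (A - B) (by omega)
  have hu0 : u ≠ 0 := by intro h; rw [h, norm_zero] at hu1; norm_num at hu1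
  set K := LinearMap.ker (Matrix.toEuclideanLin B) with hK
  set O := (ℝ ∙ u)ᗮ with hO
  set W := K ⊓ O with hW
  set d := Module.finrank ℝ W with hd
  have hOrank : Module.finrank ℝ O = n - 1 := by
    have h1 := Submodule.finrank_add_finrank_orthogonal (K := ℝ ∙ u)
    rw [← hO, finrank_span_singleton hu0, finrank_euclideanSpace_fin] at h1
    omega
  have hKrank : n - k ≤ Module.finrank ℝ K := finrank_ker_toEuclideanLin hBr
  have hdrank : n - k - 1 ≤ d := by
    have hsum := Submodule.finrank_sup_add_finrank_inf_eq K O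
    rw [← hW] at hsum
    have hle : Module.finrank ℝ ↥(K ⊔ O) ≤ n := by
      have := Submodule.finrank_le (K ⊔ O)
      rwa [finrank_euclideanSpace_fin] at this
    omega
  -- orthonormal basis of W, coerced into the ambient space
  set wb := stdOrthonormalBasis ℝ W with hwb
  set w : Fin d → EuclideanSpace ℝ (Fin n) := fun j => (wb j : EuclideanSpace ℝ (Fin n)) with hww
  have hwmem : ∀ j, w j ∈ W := fun j => (wb j).2
  have hworth : Orthonormal ℝ w := by
    rw [orthonormal_iff_ite]
    intro i j
    have := orthonormal_iff_ite.1 wb.orthonormal i j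
    rwa [Submodule.coe_inner] at this
  -- the extended family
  set f : Fin (d + 1) → EuclideanSpace ℝ (Fin n) := Fin.cons u w with hf
  have hforth : Orthonormal ℝ f := by
    rw [orthonormal_iff_ite]
    intro i j
    refine Fin.cases ?_ ?_ i <;> [skip; intro i'] <;> refine Fin.cases ?_ ?_ j
    · simp only [hf, Fin.cons_zero, if_pos rfl]
      rw [real_inner_self_eq_norm_sq, hu1]; norm_num
    · intro j'
      simp only [hf, Fin.cons_zero, Fin.cons_succ]
      rw [if_neg (by simp [Fin.succ_ne_zero j' |>.symm])]
      have hmem := (Submodule.mem_inf.1 (hwmem j')).2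
      rw [hO, Submodule.mem_orthogonal] at hmem
      exact hmem u (Submodule.mem_span_singleton_self u)
    · simp only [hf, Fin.cons_zero, Fin.cons_succ]
      rw [if_neg (by simp [Fin.succ_ne_zero i'])]
      have hmem := (Submodule.mem_inf.1 (hwmem i')).2
      rw [hO, Submodule.mem_orthogonal] at hmem
      rw [real_inner_comm]
      exact hmem u (Submodule.mem_span_singleton_self u)
    · intro j'
      simp only [hf, Fin.cons_succ]
      have := orthonormal_iff_ite.1 hworth i' j'
      rw [this]
      by_cases h : i' = j'
      · rw [if_pos h, if_pos (by rw [h])]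
      · rw [if_neg h, if_neg (fun hc => h (Fin.succ_injective _ hc))]
  have hbessel := sum_sq_apply_le_frobSq (A - B) f hforth
  rw [Fin.sum_univ_succ] at hbessel
  simp only [hf, Fin.cons_zero, Fin.cons_succ] at hbessel
  -- first term is spec squared
  have hfirst : ‖Matrix.toEuclideanLin (A - B) u‖^2 = spec (A - B)^2 := by rw [huspec]
  -- remaining terms
  have hkerw : ∀ j, Matrix.toEuclideanLin (A - B) (w j) = Matrix.toEuclideanLin A (w j) := by
    intro j
    have hmem := (Submodule.mem_inf.1 (hwmem j)).1
    rw [map_sub, LinearMap.sub_apply, LinearMap.mem_ker.1 hmem, sub_zero]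
  set t : Fin n → ℝ := fun i => ∑ j, (inner ℝ (b i) (w j) : ℝ)^2 with ht
  have hrest : ∑ j, ‖Matrix.toEuclideanLin (A - B) (w j)‖^2 = ∑ i, t i * μ i := by
    calc ∑ j, ‖Matrix.toEuclideanLin (A - B) (w j)‖^2
        = ∑ j, ∑ i, μ i * (inner ℝ (b i) (w j) : ℝ)^2 := by
          refine Finset.sum_congr rfl fun j _ => ?_
          rw [hkerw j, hray]
      _ = ∑ i, ∑ j, μ i * (inner ℝ (b i) (w j) : ℝ)^2 := Finset.sum_comm
      _ = ∑ i, t i * μ i := by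
          refine Finset.sum_congr rfl fun i _ => ?_
          rw [ht, ← Finset.mul_sum, mul_comm]
  have ht0 : ∀ i, 0 ≤ t i := fun i => Finset.sum_nonneg fun j _ => sq_nonneg _
  have ht1 : ∀ i, t i ≤ 1 := by
    intro i
    have hb := hworth.sum_inner_products_le (s := Finset.univ) (b i)
    rw [show ‖b i‖^2 = 1 by rw [b.orthonormal.1 i]; norm_num] at hb
    refine le_trans (le_of_eq ?_) hb
    refine Finset.sum_congr rfl fun j _ => ?_
    rw [real_inner_comm, Real.norm_eq_abs, sq_abs]
  have htsum : ∑ i, t i = (d : ℝ) := by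
    calc ∑ i, t i = ∑ j, ∑ i, (inner ℝ (b i) (w j) : ℝ)^2 := Finset.sum_comm
      _ = ∑ j : Fin d, (1:ℝ) := by
          refine Finset.sum_congr rfl fun j _ => ?_
          rw [parseval_sq b (w j), hworth.1 j]; norm_num
      _ = (d : ℝ) := by simp
  have hcard : ((Finset.Iio p).card : ℝ) ≤ ∑ i, t i := by
    rw [htsum, Fin.card_Iio]
    have : (p : ℕ) ≤ d := by
      simp only [hp, Fin.val_mk]
      omega
    exact_mod_cast this
  have hex := exchange μ t hmono hμ0 ht0 ht1 p hcard
  linarith [hbessel, hex, hrest, hfirst]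

end step3
open FrobSpecAux

/-- Relative Frobenius-norm error implies additive spectral-norm error: if `B` has rank at most
`k` and `‖A - B‖_F² ≤ (1+ε)‖A - A_k‖_F²`, then `‖A - B‖₂² ≤ ‖A - A_k‖₂² + ε‖A - A_k‖_F²`. -/
theorem frobenius_to_spectral_additive {n k : ℕ} (ε : ℝ)
    (A B Ak : Matrix (Fin n) (Fin n) ℝ)
    (hBrank : B.rank ≤ k)
    (hAkrank : Ak.rank ≤ k)
    (hAkbest : ∀ D : Matrix (Fin n) (Fin n) ℝ, D.rank ≤ k →
      frobSq (A - Ak) ≤ frobSq (A - D))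
    (hB : frobSq (A - B) ≤ (1 + ε) * frobSq (A - Ak)) :
    spec (A - B) ^ 2 ≤ spec (A - Ak) ^ 2 + ε * frobSq (A - Ak) := by
  by_cases hkn : n ≤ k
  · -- degenerate case: every matrix has rank at most `k`
    have hArank : A.rank ≤ k := le_trans (le_trans (Matrix.rank_le_card_width A)
      (by rw [Fintype.card_fin])) hkn
    have hAkzero : frobSq (A - Ak) = 0 := by
      have h := hAkbest A hArank
      have : A - A = 0 := sub_self A
      rw [this] at h
      have h0 : frobSq (0 : Matrix (Fin n) (Fin n) ℝ) = 0 := by simp [frobSq]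
      rw [h0] at h
      exact le_antisymm h (frobSq_nonneg _)
    have hAk0 : A - Ak = 0 := frobSq_eq_zero (le_of_eq hAkzero)
    have hB0 : A - B = 0 := frobSq_eq_zero (by rw [hAkzero] at hB; linarith [hB])
    rw [hAk0, hB0, spec_zero]
    have h0' : frobSq (0 : Matrix (Fin n) (Fin n) ℝ) = 0 := by simp [frobSq]
    rw [h0']
    norm_num
  · push_neg at hkn
    have hk : k < n := hkn
    -- eigendecomposition of the Gram matrix, sorted ascending
    have hH : (Aᴴ * A).IsHermitian := Matrix.isHermitian_conjTranspose_mul_self A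
    set σ : Equiv.Perm (Fin n) := Tuple.sort hH.eigenvalues with hσ
    set μ : Fin n → ℝ := fun i => hH.eigenvalues (σ i) with hμ
    have hmono : Monotone μ := Tuple.monotone_sort hH.eigenvalues
    set b : OrthonormalBasis (Fin n) ℝ (EuclideanSpace ℝ (Fin n)) :=
      hH.eigenvectorBasis.reindex σ.symm with hb
    have hbi : ∀ i, b i = hH.eigenvectorBasis (σ i) := by
      intro i
      rw [hb, OrthonormalBasis.reindex_apply]
      rfl
    have heig : ∀ i, Matrix.toEuclideanLin (Aᴴ * A) (b i) = μ i • b i := by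
      intro i
      rw [hbi i, hμ]
      exact toEuclideanLin_eig _ hH (σ i)
    have hray : ∀ x : EuclideanSpace ℝ (Fin n),
        ‖Matrix.toEuclideanLin A x‖^2 = ∑ i, μ i * (inner ℝ (b i) x : ℝ)^2 := by
      intro x
      rw [norm_sq_eq_inner_gram, rayleigh_expand (Aᴴ * A) b μ heig]
    have hAb : ∀ i, ‖Matrix.toEuclideanLin A (b i)‖^2 = μ i := by
      intro i
      rw [hray (b i), Finset.sum_eq_single i]
      · rw [show (inner ℝ (b i) (b i) : ℝ) = 1 by
          rw [real_inner_self_eq_norm_sq, b.orthonormal.1 i]; norm_num]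
        ring
      · intro j _ hji
        rw [b.orthonormal.2 hji]
        ring
      · intro h; exact absurd (Finset.mem_univ i) h
    have hμ0 : ∀ i, 0 ≤ μ i := fun i => (hAb i) ▸ sq_nonneg _
    set p : Fin n := ⟨n - k - 1, by omega⟩ with hp
    obtain ⟨D, hDr, hDf⟩ := eckart_achievable hk A b μ hAb
    have hbest : frobSq (A - Ak) ≤ ∑ i ∈ Finset.Iic p, μ i := by
      rw [← hDf]; exact hAkbest D hDr
    have h2 : μ p ≤ spec (A - Ak)^2 := pivot_le_spec hk A Ak hAkrank b μ hmono hray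
    have h3 : spec (A - B)^2 + ∑ i ∈ Finset.Iio p, μ i ≤ frobSq (A - B) :=
      spec_sq_add_tail_le hk A B hBrank b μ hmono hμ0 hray
    have hsplit : ∑ i ∈ Finset.Iic p, μ i = ∑ i ∈ Finset.Iio p, μ i + μ p := by
      rw [← Finset.Iio_insert, Finset.sum_insert (by simp)]
      ring
    have hexp : (1 + ε) * frobSq (A - Ak) = frobSq (A - Ak) + ε * frobSq (A - Ak) := by ring
    linarith [hB, hbest, h2, h3, hsplit, hexp]
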